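/- For every instance of the rationing problem with an unreserved category split into c_u^1 and c_u^2 and every baseline ordering ≻_π, every matching output by the Smart Reverse Rejecting (SRR) rule respects priorities: there are no agents i, j and category c such that the output matches i to c, leaves j unmatched, and j ≻_c i. -/

import Mathlib

open scoped Classical

/-- An instance of the rationing problem: a quota for every category and, for every
category `c`, a priority ranking `≿_c`: a total preorder on `N ∪ {∅}`, where we model
`N ∪ {∅}` as `Option N` with `none` playing the role of `∅`. -/
structure Inst (N C : Type*) where
  quota : C → ℕ
  prio : C → Option N → Option N → Prop
  total : ∀ c x y, prio c x y ∨ prio c y x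
  trans : ∀ c x y z, prio c x y → prio c y z → prio c x z

namespace Inst

variable {N C : Type*}

/-- The strict part `≻_c` of the priority ranking `≿_c`. -/
def Strict (I : Inst N C) (c : C) (x y : Option N) : Prop :=
  I.prio c x y ∧ ¬ I.prio c y x

/-- Agent `i` is eligible for category `c` if `i ≻_c ∅`. -/
def Eligible (I : Inst N C) (i : N) (c : C) : Prop :=
  I.Strict c (some i) none

end Inst

variable {N C : Type*} [Fintype N] [DecidableEq N] [DecidableEq C]

/-- The number of matched agents of (the function) `μ`. -/
def msize (μ : N → Option C) : ℕ :=
  (Finset.univ.filter fun i => μ i ≠ none).card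

/-- `μ` satisfies the capacity constraints: every category `c` is matched
to at most `quota c` agents. -/
def Inst.IsMatching (I : Inst N C) (μ : N → Option C) : Prop :=
  ∀ c, (Finset.univ.filter fun i => μ i = some c).card ≤ I.quota c

/-- A baseline ordering `≻_π`, given as a duplicate-free list of all agents,
listed from highest priority to lowest priority; so `i ≻_π j` iff
`order.idxOf i < order.idxOf j`. -/
def IsBaseline (order : List N) : Prop :=
  order.Nodup ∧ ∀ i : N, i ∈ order

/-- `μ` complies with the eligibility requirements. -/
def Complies (I : Inst N C) (μ : N → Option C) : Prop :=
  ∀ (i : N) (c : C), μ i = some c → I.Eligible i c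

/-- The number of agents matched to a preferential category, i.e. a category other than the
unreserved subcategories `cu1` and `cu2`. -/
def beneCount2 (cu1 cu2 : C) (μ : N → Option C) : ℕ :=
  (Finset.univ.filter fun i => μ i ≠ none ∧ μ i ≠ some cu1 ∧ μ i ≠ some cu2).card

/-- `μ` is a matching of the reservation graph of the instance restricted to the
preferential categories that leaves all agents of `S` unmatched. -/
def PMatch (I : Inst N C) (cu1 cu2 : C) (S : Finset N) (μ : N → Option C) : Prop :=
  I.IsMatching μ ∧ (∀ i ∈ S, μ i = none) ∧
    ∀ (i : N) (c : C), μ i = some c → c ≠ cu1 ∧ c ≠ cu2 ∧ I.Eligible i c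

/-- The maximum number of agents of `N \ S` that can simultaneously be matched to
preferential categories. -/
noncomputable def msAvoid (I : Inst N C) (cu1 cu2 : C) (S : Finset N) : ℕ :=
  sSup {k | ∃ μ : N → Option C, PMatch I cu1 cu2 S μ ∧ msize μ = k}

/-- The set `N_1` of agents receiving an unreserved unit of `c_u^1` under the SRR rule:
considering the agents in order of the baseline ordering from highest to lowest priority,
agent `i` is added to `N_1` if `|N_1| < q_{c_u^1}` and the agents in `N \ (N_1 ∪ {i})` can
still be matched to the preferential categories so as to form a maximum beneficiary
assignment. -/
noncomputable def srrN1 (I : Inst N C) (cu1 cu2 : C) (order : List N) : Finset N :=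
  order.foldl
    (fun N1 i =>
      if N1.card < I.quota cu1 ∧
          msAvoid I cu1 cu2 (insert i N1) = msAvoid I cu1 cu2 (∅ : Finset N) then
        insert i N1
      else N1) ∅

/-- `μ` is a matching of the reduced reservation graph (restricted to the preferential
categories) in which the agents of `N1` are removed and, additionally, all edges `{j,c}`
such that some rejected agent `i ∈ R` has `i ≻_c j` are removed. -/
def PMatchR (I : Inst N C) (cu1 cu2 : C) (N1 R : Finset N) (μ : N → Option C) : Prop :=
  PMatch I cu1 cu2 (N1 ∪ R) μ ∧
    ∀ (i : N) (c : C), μ i = some c → ∀ j ∈ R, ¬ I.Strict c (some j) (some i)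

/-- The size of a maximum size matching of the reduced reservation graph (restricted to the
preferential categories, without the agents of `N1`, with rejected set `R`). -/
noncomputable def msR (I : Inst N C) (cu1 cu2 : C) (N1 R : Finset N) : ℕ :=
  sSup {k | ∃ μ : N → Option C, PMatchR I cu1 cu2 N1 R μ ∧ msize μ = k}

/-- The rejected set of the RR rule run on the agents outside `N1` with the preferential
categories, processing the agents from lowest to highest baseline priority. -/
noncomputable def srrRej (I : Inst N C) (cu1 cu2 : C) (order : List N) (N1 : Finset N) :
    Finset N :=
  (order.filter fun i => decide (i ∉ N1)).foldr
    (fun i R =>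
      if msR I cu1 cu2 N1 (insert i R) = msR I cu1 cu2 N1 (∅ : Finset N) then insert i R
      else R) ∅

/-- The final matching of the SRR rule, given the set `N1` of agents matched to `c_u^1` and
the matching `μP` of the remaining agents to the preferential categories: the agents left
unmatched receive the `q_{c_u^2}` units of `c_u^2` in order of the baseline ordering from
highest to lowest priority. -/
noncomputable def srrFinal (I : Inst N C) (cu1 cu2 : C) (order : List N) (N1 : Finset N)
    (μP : N → Option C) : N → Option C := fun i =>
  if i ∈ N1 then some cu1
  else
    match μP i with
    | some c => some c
    | none =>
      if (Finset.univ.filter fun j =>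
            j ∉ N1 ∧ μP j = none ∧ order.idxOf j < order.idxOf i).card <
          I.quota cu2 then
        some cu2
      else none

/-- `μ` is a possible output of the Smart Reverse Rejecting (SRR) rule. -/
def IsSRROutcome (I : Inst N C) (cu1 cu2 : C) (order : List N) (μ : N → Option C) : Prop :=
  ∃ μP : N → Option C,
    PMatchR I cu1 cu2 (srrN1 I cu1 cu2 order) (srrRej I cu1 cu2 order (srrN1 I cu1 cu2 order))
      μP ∧
    msize μP =
      msR I cu1 cu2 (srrN1 I cu1 cu2 order) (srrRej I cu1 cu2 order (srrN1 I cu1 cu2 order)) ∧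
    μ = srrFinal I cu1 cu2 order (srrN1 I cu1 cu2 order) μP

section Helpers

open Finset

variable (I : Inst N C) (cu1 cu2 : C)

lemma strict_trans' {c : C} {a b d : Option N} (h1 : I.Strict c a b) (h2 : I.Strict c b d) :
    I.Strict c a d :=
  ⟨I.trans c a b d h1.1 h2.1, fun h => h2.2 (I.trans c d a b h h1.1)⟩

lemma msize_le_card (μ : N → Option C) : msize μ ≤ Fintype.card N := by
  classical
  simpa [msize, Finset.card_univ] using Finset.card_filter_le Finset.univ _

lemma msize_none : msize (fun _ : N => (none : Option C)) = 0 := by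
  simp [msize]

lemma pmatchR_none (N1 R : Finset N) :
    PMatchR I cu1 cu2 N1 R (fun _ => (none : Option C)) := by
  refine ⟨⟨fun c => ?_, fun i _ => rfl, fun i c h => by cases h⟩, fun i c h => by cases h⟩
  simp

lemma pmatch_none (S : Finset N) : PMatch I cu1 cu2 S (fun _ => (none : Option C)) := by
  refine ⟨fun c => ?_, fun i _ => rfl, fun i c h => by cases h⟩
  simp

lemma msR_set_bdd (N1 R : Finset N) :
    BddAbove {k | ∃ μ : N → Option C, PMatchR I cu1 cu2 N1 R μ ∧ msize μ = k} :=
  ⟨Fintype.card N, by rintro k ⟨μ, -, rfl⟩; exact msize_le_card μ⟩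

lemma msAvoid_set_bdd (S : Finset N) :
    BddAbove {k | ∃ μ : N → Option C, PMatch I cu1 cu2 S μ ∧ msize μ = k} :=
  ⟨Fintype.card N, by rintro k ⟨μ, -, rfl⟩; exact msize_le_card μ⟩

lemma le_msR {N1 R : Finset N} {ν : N → Option C} (h : PMatchR I cu1 cu2 N1 R ν) :
    msize ν ≤ msR I cu1 cu2 N1 R :=
  le_csSup (msR_set_bdd I cu1 cu2 N1 R) ⟨ν, h, rfl⟩

lemma le_msAvoid {S : Finset N} {ν : N → Option C} (h : PMatch I cu1 cu2 S ν) :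
    msize ν ≤ msAvoid I cu1 cu2 S :=
  le_csSup (msAvoid_set_bdd I cu1 cu2 S) ⟨ν, h, rfl⟩

lemma pmatch_mono {S S' : Finset N} (h : S ⊆ S') {ν : N → Option C}
    (hν : PMatch I cu1 cu2 S' ν) : PMatch I cu1 cu2 S ν :=
  ⟨hν.1, fun i hi => hν.2.1 i (h hi), hν.2.2⟩

lemma msAvoid_mono {S S' : Finset N} (h : S ⊆ S') :
    msAvoid I cu1 cu2 S' ≤ msAvoid I cu1 cu2 S := by
  refine csSup_le_csSup (msAvoid_set_bdd I cu1 cu2 S) ⟨0, fun _ => none, pmatch_none I cu1 cu2 S', msize_none⟩ ?_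
  rintro k ⟨μ, hμ, rfl⟩
  exact ⟨μ, pmatch_mono I cu1 cu2 h hμ, rfl⟩

lemma msR_mono {N1 : Finset N} {R R' : Finset N} (h : R ⊆ R') :
    msR I cu1 cu2 N1 R' ≤ msR I cu1 cu2 N1 R := by
  refine csSup_le_csSup (msR_set_bdd I cu1 cu2 N1 R)
    ⟨0, fun _ => none, pmatchR_none I cu1 cu2 N1 R', msize_none⟩ ?_
  rintro k ⟨μ, hμ, rfl⟩
  exact ⟨μ, ⟨pmatch_mono I cu1 cu2 (Finset.union_subset_union_right h) hμ.1,
    fun i c hc j hj => hμ.2 i c hc j (h hj)⟩, rfl⟩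

lemma msR_empty (N1 : Finset N) : msR I cu1 cu2 N1 ∅ = msAvoid I cu1 cu2 N1 := by
  unfold msR msAvoid
  congr 1
  ext k
  constructor
  · rintro ⟨μ, ⟨hμ, -⟩, rfl⟩
    exact ⟨μ, by rwa [Finset.union_empty] at hμ, rfl⟩
  · rintro ⟨μ, hμ, rfl⟩
    exact ⟨μ, ⟨by rwa [Finset.union_empty], fun i c _ j hj => absurd hj (Finset.notMem_empty j)⟩, rfl⟩

end Helpers
section Folds

open Finset

variable {P : Finset N → N → Prop} {f : Finset N → N → Finset N}
variable {P' : N → Finset N → Prop} {g : N → Finset N → Finset N}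

lemma step_subset_foldl (hf1 : ∀ s i, f s i = s ∨ f s i = insert i s) (s : Finset N) (i : N) :
    s ⊆ f s i := by
  rcases hf1 s i with h | h <;> rw [h] <;> exact Finset.subset_insert _ _

lemma subset_foldl (hf1 : ∀ s i, f s i = s ∨ f s i = insert i s) :
    ∀ (l : List N) (s : Finset N), s ⊆ l.foldl f s := by
  intro l
  induction l with
  | nil => intro s; exact Finset.Subset.refl s
  | cons a l ih =>
    intro s
    rw [List.foldl_cons]
    exact (step_subset_foldl hf1 s a).trans (ih (f s a))

lemma foldl_subset_union (hf1 : ∀ s i, f s i = s ∨ f s i = insert i s) :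
    ∀ (l : List N) (s : Finset N), l.foldl f s ⊆ s ∪ l.toFinset := by
  intro l
  induction l with
  | nil => intro s; simp
  | cons a l ih =>
    intro s
    rw [List.foldl_cons]
    refine (ih (f s a)).trans ?_
    intro y hy
    rcases Finset.mem_union.mp hy with hy | hy
    · have : y ∈ insert a s := by
        rcases hf1 s a with h | h
        · exact Finset.mem_insert_of_mem (h ▸ hy)
        · exact h ▸ hy
      rcases Finset.mem_insert.mp this with rfl | hy
      · simp
      · exact Finset.mem_union_left _ hy
    · apply Finset.mem_union_right
      simp only [List.toFinset_cons, Finset.mem_insert]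
      exact Or.inr hy

lemma foldl_invariant {Q : Finset N → Prop}
    (hf1 : ∀ s i, f s i = s ∨ f s i = insert i s)
    (hf2 : ∀ s i, i ∉ s → i ∈ f s i → P s i)
    (hQ : ∀ s i, Q s → P s i → Q (insert i s)) :
    ∀ (l : List N) (s : Finset N), Q s → Q (l.foldl f s) := by
  intro l
  induction l with
  | nil => intro s hs; exact hs
  | cons a l ih =>
    intro s hs
    rw [List.foldl_cons]
    refine ih (f s a) ?_
    rcases hf1 s a with h | h
    · rwa [h]
    · by_cases ha : a ∈ s
      · rwa [h, Finset.insert_eq_self.mpr ha]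
      · rw [h]; exact hQ s a hs (hf2 s a ha (h ▸ Finset.mem_insert_self a s))

lemma foldl_evidence
    (hf1 : ∀ s i, f s i = s ∨ f s i = insert i s)
    (hf2 : ∀ s i, i ∉ s → i ∈ f s i → P s i) :
    ∀ (l : List N) (s : Finset N) (i : N), i ∈ l.foldl f s → i ∉ s → ∃ u, s ⊆ u ∧ P u i := by
  intro l
  induction l with
  | nil => intro s i hi his; exact absurd hi his
  | cons a l ih =>
    intro s i hi his
    rw [List.foldl_cons] at hi
    by_cases hm : i ∈ f s a
    · rcases hf1 s a with h | h
      · exact absurd (h ▸ hm) his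
      · rcases Finset.mem_insert.mp (h ▸ hm) with rfl | hmem
        · exact ⟨s, Finset.Subset.refl s, hf2 s i his hm⟩
        · exact absurd hmem his
    · obtain ⟨u, hu, hP⟩ := ih (f s a) i hi hm
      exact ⟨u, (step_subset_foldl hf1 s a).trans hu, hP⟩

lemma step_subset_foldr (hg1 : ∀ i s, g i s = s ∨ g i s = insert i s) (i : N) (s : Finset N) :
    s ⊆ g i s := by
  rcases hg1 i s with h | h <;> rw [h] <;> exact Finset.subset_insert _ _

lemma subset_foldr (hg1 : ∀ i s, g i s = s ∨ g i s = insert i s) :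
    ∀ (l : List N) (s : Finset N), s ⊆ l.foldr g s := by
  intro l
  induction l with
  | nil => intro s; exact Finset.Subset.refl s
  | cons a l ih =>
    intro s
    rw [List.foldr_cons]
    exact (ih s).trans (step_subset_foldr hg1 a _)

lemma foldr_invariant {Q : Finset N → Prop}
    (hg1 : ∀ i s, g i s = s ∨ g i s = insert i s)
    (hg2 : ∀ i s, i ∉ s → i ∈ g i s → P' i s)
    (hQ : ∀ i s, Q s → P' i s → Q (insert i s)) :
    ∀ (l : List N) (s : Finset N), Q s → Q (l.foldr g s) := by
  intro l
  induction l with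
  | nil => intro s hs; exact hs
  | cons a l ih =>
    intro s hs
    rw [List.foldr_cons]
    have hQl : Q (l.foldr g s) := ih s hs
    rcases hg1 a (l.foldr g s) with h | h
    · rwa [h]
    · by_cases ha : a ∈ l.foldr g s
      · rwa [h, Finset.insert_eq_self.mpr ha]
      · rw [h]
        exact hQ a _ hQl (hg2 a _ ha (h ▸ Finset.mem_insert_self a _))

lemma index_split : ∀ (l : List N) (i j : N), i ∈ l → j ∈ l →
    l.idxOf j < l.idxOf i → ∃ l₁ l₂, l = l₁ ++ j :: l₂ ∧ i ∈ l₂ := by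
  intro l
  induction l with
  | nil => intro i j hi _ _; cases hi
  | cons a l ih =>
    intro i j hi hj hlt
    by_cases hja : j = a
    · subst hja
      have hij : i ≠ j := by
        rintro rfl
        simp [List.idxOf_cons_self] at hlt
      have hil : i ∈ l := by
        rcases List.mem_cons.mp hi with rfl | h
        · exact absurd rfl hij
        · exact h
      exact ⟨[], l, rfl, hil⟩
    · have hia : i ≠ a := by
        rintro rfl
        rw [List.idxOf_cons_self] at hlt
        exact Nat.not_lt_zero _ hlt
      have hil : i ∈ l := by
        rcases List.mem_cons.mp hi with rfl | h
        · exact absurd rfl hia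
        · exact h
      have hjl : j ∈ l := by
        rcases List.mem_cons.mp hj with rfl | h
        · exact absurd rfl hja
        · exact h
      have hlt' : l.idxOf j < l.idxOf i := by
        rw [List.idxOf_cons_ne l (Ne.symm hja), List.idxOf_cons_ne l (Ne.symm hia)] at hlt
        exact Nat.succ_lt_succ_iff.mp hlt
      obtain ⟨l₁, l₂, rfl, hil₂⟩ := ih i j hil hjl hlt'
      exact ⟨a :: l₁, l₂, rfl, hil₂⟩

end Folds
section Weight

open Finset

noncomputable def wt (I : Inst N C) : Option C → N → ℕ
  | none, _ => 0
  | some c, i => (Finset.univ.filter fun y => I.prio c (some i) (some y)).card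

noncomputable def wgt (I : Inst N C) (ν : N → Option C) : ℕ := ∑ i, wt I (ν i) i

lemma wt_le (I : Inst N C) (o : Option C) (i : N) : wt I o i ≤ Fintype.card N := by
  cases o with
  | none => exact Nat.zero_le _
  | some c => simpa [wt, Finset.card_univ] using Finset.card_filter_le Finset.univ _

lemma wgt_le (I : Inst N C) (ν : N → Option C) :
    wgt I ν ≤ Fintype.card N * Fintype.card N := by
  calc wgt I ν ≤ ∑ _i : N, Fintype.card N := Finset.sum_le_sum fun i _ => wt_le I (ν i) i
  _ = Fintype.card N * Fintype.card N := by simp [Finset.card_univ, mul_comm]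

lemma wt_lt (I : Inst N C) {c : C} {x k : N} (h : I.Strict c (some x) (some k)) :
    wt I (some c) k < wt I (some c) x := by
  apply Finset.card_lt_card
  rw [Finset.ssubset_iff_of_subset]
  · refine ⟨x, ?_, ?_⟩
    · simp only [Finset.mem_filter, Finset.mem_univ, true_and]
      rcases I.total c (some x) (some x) with h' | h' <;> exact h'
    · simp only [Finset.mem_filter, Finset.mem_univ, true_and]
      exact h.2
  · intro y hy
    simp only [Finset.mem_filter, Finset.mem_univ, true_and] at hy ⊢
    exact I.trans c _ _ _ h.1 hy

lemma swap_facts (I : Inst N C) (cu1 cu2 : C) {N1 R : Finset N} {ν : N → Option C}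
    (hν : PMatchR I cu1 cu2 N1 R ν) {x k : N} {c' : C}
    (hx1 : x ∉ N1) (hx2 : x ∉ R) (hxm : ν x = none)
    (hk : ν k = some c') (hdom : I.Strict c' (some x) (some k)) :
    PMatchR I cu1 cu2 N1 R (fun y => if y = x then some c' else if y = k then none else ν y) ∧
      msize (fun y => if y = x then some c' else if y = k then none else ν y) = msize ν ∧
      wgt I ν < wgt I (fun y => if y = x then some c' else if y = k then none else ν y) := by
  classical
  set ν' := fun y => if y = x then some c' else if y = k then none else ν y with hν'def
  have hxk : x ≠ k := by rintro rfl; rw [hxm] at hk; cases hk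
  have hkprops := hν.1.2.2 k c' hk
  have hkelig : I.Eligible x c' := strict_trans' I hdom hkprops.2.2
  refine ⟨⟨⟨?_, ?_, ?_⟩, ?_⟩, ?_, ?_⟩
  · -- IsMatching
    intro d
    by_cases hd : d = c'
    · subst hd
      have hset : (Finset.univ.filter fun y => ν' y = some d) =
          insert x ((Finset.univ.filter fun y => ν y = some d).erase k) := by
        ext y
        simp only [Finset.mem_filter, Finset.mem_univ, true_and, Finset.mem_insert,
          Finset.mem_erase]
        by_cases hyx : y = x
        · subst hyx; simp [ν']
        · by_cases hyk : y = k
          · subst hyk; simp [ν', hyx, Ne.symm hxk]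
          · simp [ν', hyx, hyk]
      rw [hset, Finset.card_insert_of_notMem, Finset.card_erase_add_one]
      · exact hν.1.1 d
      · simp only [Finset.mem_filter, Finset.mem_univ, true_and]; exact hk
      · simp only [Finset.mem_erase, Finset.mem_filter, Finset.mem_univ, true_and]
        rintro ⟨-, h⟩; rw [hxm] at h; cases h
    · have hset : (Finset.univ.filter fun y => ν' y = some d) =
          (Finset.univ.filter fun y => ν y = some d) := by
        ext y
        simp only [Finset.mem_filter, Finset.mem_univ, true_and]
        by_cases hyx : y = x
        · subst hyx
          simp only [ν', if_pos rfl, hxm]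
          constructor
          · intro h; exact absurd (Option.some.inj h).symm hd
          · intro h; cases h
        · by_cases hyk : y = k
          · subst hyk
            simp only [ν', if_neg hyx, if_pos rfl, hk]
            constructor
            · intro h; cases h
            · intro h; exact absurd (Option.some.inj h).symm hd
          · simp [ν', hyx, hyk]
      rw [hset]; exact hν.1.1 d
  · -- unmatched on N1 ∪ R
    intro m hm
    have hmx : m ≠ x := by
      rintro rfl
      rcases Finset.mem_union.mp hm with h | h
      · exact hx1 h
      · exact hx2 h
    have hmk : m ≠ k := by
      rintro rfl
      rw [hν.1.2.1 m hm] at hk; cases hk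
    simp only [ν', if_neg hmx, if_neg hmk]
    exact hν.1.2.1 m hm
  · -- eligibility
    intro y c₀ h
    by_cases hyx : y = x
    · subst hyx
      simp only [ν', if_pos rfl] at h
      obtain rfl := Option.some.inj h
      exact ⟨hkprops.1, hkprops.2.1, hkelig⟩
    · by_cases hyk : y = k
      · subst hyk; simp only [ν', if_neg hyx, if_pos rfl] at h; cases h
      · simp only [ν', if_neg hyx, if_neg hyk] at h
        exact hν.1.2.2 y c₀ h
  · -- edges not dominated by R
    intro y c₀ h r hr
    by_cases hyx : y = x
    · subst hyx
      simp only [ν', if_pos rfl] at h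
      obtain rfl := Option.some.inj h
      intro hs
      exact hν.2 k _ hk r hr (strict_trans' I hs hdom)
    · by_cases hyk : y = k
      · subst hyk; simp only [ν', if_neg hyx, if_pos rfl] at h; cases h
      · simp only [ν', if_neg hyx, if_neg hyk] at h
        exact hν.2 y c₀ h r hr
  · -- msize
    have hset : (Finset.univ.filter fun y => ν' y ≠ none) =
        insert x ((Finset.univ.filter fun y => ν y ≠ none).erase k) := by
      ext y
      simp only [Finset.mem_filter, Finset.mem_univ, true_and, Finset.mem_insert,
        Finset.mem_erase]
      by_cases hyx : y = x
      · subst hyx; simp [ν']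
      · by_cases hyk : y = k
        · subst hyk; simp [ν', hyx, Ne.symm hxk]
        · simp [ν', hyx, hyk]
    rw [msize, msize, hset, Finset.card_insert_of_notMem, Finset.card_erase_add_one]
    · simp only [Finset.mem_filter, Finset.mem_univ, true_and]
      rw [hk]; simp
    · simp only [Finset.mem_erase, Finset.mem_filter, Finset.mem_univ, true_and]
      rintro ⟨-, h⟩; exact h hxm
  · -- weight increases
    have hkx : k ∈ Finset.univ.erase x := Finset.mem_erase.mpr ⟨Ne.symm hxk, Finset.mem_univ k⟩
    have split : ∀ μ0 : N → Option C, wgt I μ0 =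
        wt I (μ0 x) x + (wt I (μ0 k) k + ∑ y ∈ (Finset.univ.erase x).erase k, wt I (μ0 y) y) := by
      intro μ0
      rw [wgt, ← Finset.add_sum_erase _ _ (Finset.mem_univ x),
        ← Finset.add_sum_erase _ _ hkx]
    rw [split ν, split ν']
    have hsum : ∑ y ∈ (Finset.univ.erase x).erase k, wt I (ν' y) y =
        ∑ y ∈ (Finset.univ.erase x).erase k, wt I (ν y) y := by
      refine Finset.sum_congr rfl fun y hy => ?_
      have hyk : y ≠ k := (Finset.mem_erase.mp hy).1
      have hyx : y ≠ x := (Finset.mem_erase.mp (Finset.mem_erase.mp hy).2).1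
      simp [ν', hyx, hyk]
    have hx' : ν' x = some c' := by simp [ν']
    have hk' : ν' k = none := by simp [ν', Ne.symm hxk]
    rw [hsum, hxm, hk, hx', hk']
    have h1 : wt I (some c') k < wt I (some c') x := wt_lt I hdom
    simp only [wt] at h1 ⊢
    omega
end Weight
section KeyLemma

open Finset

lemma key_lemma (I : Inst N C) (cu1 cu2 : C) (N1 R : Finset N)
    (hdrop : ∀ x, x ∉ N1 → x ∉ R → msR I cu1 cu2 N1 (insert x R) < msR I cu1 cu2 N1 R) :
    ∀ (n : ℕ) (ν : N → Option C) (x : N),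
      Fintype.card N * Fintype.card N - wgt I ν ≤ n →
      PMatchR I cu1 cu2 N1 R ν → msize ν = msR I cu1 cu2 N1 R →
      x ∉ N1 → x ∉ R → ν x = none → False := by
  intro n
  induction n using Nat.strong_induction_on with
  | _ n ih =>
    intro ν x hw hν hms hx1 hx2 hxm
    by_cases hdom : ∃ (k : N) (c' : C), ν k = some c' ∧ I.Strict c' (some x) (some k)
    · obtain ⟨k, c', hk, hd⟩ := hdom
      obtain ⟨hν', hsz, hlt⟩ := swap_facts I cu1 cu2 hν hx1 hx2 hxm hk hd
      set ν' := fun y => if y = x then some c' else if y = k then none else ν y with hν'def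
      have hxk : x ≠ k := by rintro rfl; rw [hxm] at hk; cases hk
      have hkNR : k ∉ N1 ∪ R := by
        intro h; rw [hν.1.2.1 k h] at hk; cases hk
      have hwW : wgt I ν < Fintype.card N * Fintype.card N :=
        lt_of_lt_of_le hlt (wgt_le I ν')
      have hmeas : Fintype.card N * Fintype.card N - wgt I ν' < n :=
        lt_of_lt_of_le (Nat.sub_lt_sub_left hwW hlt) hw
      refine ih _ hmeas ν' k le_rfl hν' (hsz.trans hms) ?_ ?_ ?_
      · intro h; exact hkNR (Finset.mem_union_left _ h)
      · intro h; exact hkNR (Finset.mem_union_right _ h)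
      · simp [ν', Ne.symm hxk]
    · push_neg at hdom
      have hν2 : PMatchR I cu1 cu2 N1 (insert x R) ν := by
        refine ⟨⟨hν.1.1, ?_, hν.1.2.2⟩, ?_⟩
        · intro m hm
          rcases Finset.mem_union.mp hm with h | h
          · exact hν.1.2.1 m (Finset.mem_union_left _ h)
          · rcases Finset.mem_insert.mp h with rfl | h
            · exact hxm
            · exact hν.1.2.1 m (Finset.mem_union_right _ h)
        · intro y c₀ h r hr
          rcases Finset.mem_insert.mp hr with rfl | hr
          · exact hdom y c₀ h
          · exact hν.2 y c₀ h r hr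
      have h1 : msize ν ≤ msR I cu1 cu2 N1 (insert x R) := le_msR I cu1 cu2 hν2
      have h2 : msR I cu1 cu2 N1 (insert x R) < msR I cu1 cu2 N1 R := hdrop x hx1 hx2
      omega

/-- Facts about the rejected set of the RR run. -/
lemma srrRej_facts (I : Inst N C) (cu1 cu2 : C) (order : List N) (hb : IsBaseline order)
    (N1 : Finset N) :
    msR I cu1 cu2 N1 (srrRej I cu1 cu2 order N1) = msR I cu1 cu2 N1 ∅ ∧
      ∀ x, x ∉ N1 → x ∉ srrRej I cu1 cu2 order N1 →
        msR I cu1 cu2 N1 (insert x (srrRej I cu1 cu2 order N1)) < msR I cu1 cu2 N1 ∅ := by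
  classical
  set g : N → Finset N → Finset N := fun i R =>
    if msR I cu1 cu2 N1 (insert i R) = msR I cu1 cu2 N1 (∅ : Finset N) then insert i R else R
    with hg
  have hg1 : ∀ i s, g i s = s ∨ g i s = insert i s := by
    intro i s
    by_cases h : msR I cu1 cu2 N1 (insert i s) = msR I cu1 cu2 N1 (∅ : Finset N)
    · right; simp [g, if_pos h]
    · left; simp [g, if_neg h]
  have hg2 : ∀ i s, i ∉ s → i ∈ g i s →
      msR I cu1 cu2 N1 (insert i s) = msR I cu1 cu2 N1 (∅ : Finset N) := by
    intro i s his hm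
    by_cases h : msR I cu1 cu2 N1 (insert i s) = msR I cu1 cu2 N1 (∅ : Finset N)
    · exact h
    · simp only [g, if_neg h] at hm; exact absurd hm his
  have hRdef : srrRej I cu1 cu2 order N1 =
      (order.filter fun i => decide (i ∉ N1)).foldr g ∅ := rfl
  constructor
  · rw [hRdef]
    exact foldr_invariant (Q := fun s => msR I cu1 cu2 N1 s = msR I cu1 cu2 N1 ∅)
      hg1 hg2 (fun i s _ h => h) _ _ rfl
  · intro x hx1 hx2
    have hxL : x ∈ order.filter fun i => decide (i ∉ N1) :=
      List.mem_filter.mpr ⟨hb.2 x, by simpa using hx1⟩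
    obtain ⟨l₁, l₂, hL⟩ := List.append_of_mem hxL
    set t : Finset N := l₂.foldr g ∅ with ht
    have hfold : srrRej I cu1 cu2 order N1 = l₁.foldr g (g x t) := by
      rw [hRdef, hL, List.foldr_append, List.foldr_cons]
    have hgsub : g x t ⊆ srrRej I cu1 cu2 order N1 := by
      rw [hfold]; exact subset_foldr hg1 l₁ _
    have hnot : ¬ msR I cu1 cu2 N1 (insert x t) = msR I cu1 cu2 N1 (∅ : Finset N) := by
      intro h
      have : x ∈ g x t := by simp [g, if_pos h]
      exact hx2 (hgsub this)
    have htR : t ⊆ srrRej I cu1 cu2 order N1 :=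
      (step_subset_foldr hg1 x t).trans hgsub
    have hle : msR I cu1 cu2 N1 (insert x (srrRej I cu1 cu2 order N1)) ≤
        msR I cu1 cu2 N1 (insert x t) :=
      msR_mono I cu1 cu2 (Finset.insert_subset_insert x htR)
    have hle2 : msR I cu1 cu2 N1 (insert x t) ≤ msR I cu1 cu2 N1 ∅ :=
      msR_mono I cu1 cu2 (Finset.empty_subset _)
    omega

/-- Facts about the set `N1` selected by the SRR rule. -/
lemma srrN1_facts (I : Inst N C) (cu1 cu2 : C) (order : List N) (hb : IsBaseline order) :
    msAvoid I cu1 cu2 (srrN1 I cu1 cu2 order) = msAvoid I cu1 cu2 ∅ ∧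
      ∀ j i : N, j ∉ srrN1 I cu1 cu2 order → i ∈ srrN1 I cu1 cu2 order →
        order.idxOf j < order.idxOf i →
        ∃ t : Finset N, t ⊆ srrN1 I cu1 cu2 order ∧
          msAvoid I cu1 cu2 (insert j t) ≠ msAvoid I cu1 cu2 ∅ := by
  classical
  set f : Finset N → N → Finset N := fun s i =>
    if s.card < I.quota cu1 ∧
        msAvoid I cu1 cu2 (insert i s) = msAvoid I cu1 cu2 (∅ : Finset N) then insert i s
    else s with hf
  have hf1 : ∀ s i, f s i = s ∨ f s i = insert i s := by
    intro s i
    by_cases h : s.card < I.quota cu1 ∧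
        msAvoid I cu1 cu2 (insert i s) = msAvoid I cu1 cu2 (∅ : Finset N)
    · right; simp [f, if_pos h]
    · left; simp [f, if_neg h]
  have hf2 : ∀ s i, i ∉ s → i ∈ f s i →
      s.card < I.quota cu1 ∧
        msAvoid I cu1 cu2 (insert i s) = msAvoid I cu1 cu2 (∅ : Finset N) := by
    intro s i his hm
    by_cases h : s.card < I.quota cu1 ∧
        msAvoid I cu1 cu2 (insert i s) = msAvoid I cu1 cu2 (∅ : Finset N)
    · exact h
    · simp only [f, if_neg h] at hm; exact absurd hm his
  have hN1def : srrN1 I cu1 cu2 order = order.foldl f ∅ := rfl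
  constructor
  · rw [hN1def]
    exact foldl_invariant (Q := fun s => msAvoid I cu1 cu2 s = msAvoid I cu1 cu2 ∅)
      hf1 hf2 (fun s i _ h => h.2) _ _ rfl
  · intro j i hj hi hlt
    obtain ⟨l₁, l₂, hL, hil₂⟩ := index_split order i j (hb.2 i) (hb.2 j) hlt
    set t : Finset N := l₁.foldl f ∅ with ht
    have hfold : srrN1 I cu1 cu2 order = l₂.foldl f (f t j) := by
      rw [hN1def, hL, List.foldl_append, List.foldl_cons]
    have hftj : f t j = t := by
      rcases hf1 t j with h | h
      · exact h
      · exfalso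
        apply hj
        rw [hfold, h]
        exact subset_foldl hf1 l₂ _ (Finset.mem_insert_self j t)
    have htN1 : t ⊆ srrN1 I cu1 cu2 order := by
      rw [hfold, hftj]; exact subset_foldl hf1 l₂ t
    have hjt : j ∉ t := fun h => hj (htN1 h)
    -- t.card < quota, via the insertion evidence for i
    have hil : i ∉ l₁ := by
      have hnd := hb.1
      rw [hL, List.nodup_append] at hnd
      exact fun h => hnd.2.2 i h i (List.mem_cons_of_mem _ hil₂) rfl
    have hit : i ∉ t := by
      intro h
      have := foldl_subset_union hf1 l₁ ∅ h
      rcases Finset.mem_union.mp this with h' | h'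
      · exact absurd h' (Finset.notMem_empty i)
      · exact hil (List.mem_toFinset.mp h')
    have hiN1 : i ∈ l₂.foldl f t := by rw [← hftj, ← hfold]; exact hi
    obtain ⟨u, htu, hPu⟩ := foldl_evidence hf1 hf2 l₂ t i hiN1 hit
    have htcard : t.card < I.quota cu1 := lt_of_le_of_lt (Finset.card_le_card htu) hPu.1
    refine ⟨t, htN1, fun h => ?_⟩
    have : ¬ (t.card < I.quota cu1 ∧
        msAvoid I cu1 cu2 (insert j t) = msAvoid I cu1 cu2 (∅ : Finset N)) := by
      intro hP
      -- if P t j held then f t j = insert j t ∋ j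
      have : f t j = insert j t := by simp [f, if_pos hP]
      rw [this] at hftj
      exact hjt (hftj ▸ Finset.mem_insert_self j t)
    exact this ⟨htcard, h⟩
  
end KeyLemma

/-- Every matching output by the SRR rule respects priorities: there are no
agents `i, j` and category `c` such that `μ i = c`, `μ j = ∅`, and `j ≻_c i`. -/
theorem srr_respects_priorities (I : Inst N C) (cu1 cu2 : C) (order : List N)
    (μ : N → Option C) (hne : cu1 ≠ cu2) (hb : IsBaseline order)
    (h1E : ∀ i : N, I.Eligible i cu1) (h2E : ∀ i : N, I.Eligible i cu2)
    (h1P : ∀ i j : N, I.Strict cu1 (some i) (some j) ↔ order.idxOf i < order.idxOf j)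
    (h2P : ∀ i j : N, I.Strict cu2 (some i) (some j) ↔ order.idxOf i < order.idxOf j)
    (hout : IsSRROutcome I cu1 cu2 order μ) :
    ¬ ∃ (i j : N) (c : C), μ i = some c ∧ μ j = none ∧ I.Strict c (some j) (some i) := by
  classical
  rintro ⟨i, j, c, hi, hj, hstrict⟩
  obtain ⟨μP, hPR, hms, rfl⟩ := hout
  obtain ⟨hA1, hA2⟩ := srrN1_facts I cu1 cu2 order hb
  obtain ⟨hR1, hR2⟩ := srrRej_facts I cu1 cu2 order hb (srrN1 I cu1 cu2 order)
  have hjN1 : j ∉ srrN1 I cu1 cu2 order := by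
    intro h; simp [srrFinal, h] at hj
  have hjP : μP j = none := by
    cases hmj : μP j with
    | none => rfl
    | some c₀ => exfalso; simp [srrFinal, hjN1, hmj] at hj
  have hjq : ¬ ((Finset.univ.filter fun k => k ∉ srrN1 I cu1 cu2 order ∧ μP k = none ∧
      order.idxOf k < order.idxOf j).card < I.quota cu2) := by
    intro hq; simp [srrFinal, hjN1, hjP, hq] at hj
  have e3 : msR I cu1 cu2 (srrN1 I cu1 cu2 order) ∅ =
      msAvoid I cu1 cu2 (srrN1 I cu1 cu2 order) := msR_empty I cu1 cu2 _
  by_cases hiN1 : i ∈ srrN1 I cu1 cu2 order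
  · -- `i` received a `cu1` unit
    have hc : c = cu1 := by
      simp only [srrFinal, if_pos hiN1, Option.some.injEq] at hi
      exact hi.symm
    rw [hc] at hstrict
    have hidx : order.idxOf j < order.idxOf i := (h1P j i).mp hstrict
    obtain ⟨t, htN1, htne⟩ := hA2 j i hjN1 hiN1 hidx
    apply htne
    refine le_antisymm (msAvoid_mono I cu1 cu2 (Finset.empty_subset _)) ?_
    have hpm : PMatch I cu1 cu2 (insert j t) μP := by
      refine ⟨hPR.1.1, ?_, hPR.1.2.2⟩
      intro m hm
      rcases Finset.mem_insert.mp hm with rfl | hm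
      · exact hjP
      · exact hPR.1.2.1 m (Finset.mem_union_left _ (htN1 hm))
    calc msAvoid I cu1 cu2 ∅ = msAvoid I cu1 cu2 (srrN1 I cu1 cu2 order) := hA1.symm
      _ = msR I cu1 cu2 (srrN1 I cu1 cu2 order) ∅ := e3.symm
      _ = msR I cu1 cu2 (srrN1 I cu1 cu2 order)
            (srrRej I cu1 cu2 order (srrN1 I cu1 cu2 order)) := hR1.symm
      _ = msize μP := hms.symm
      _ ≤ msAvoid I cu1 cu2 (insert j t) := le_msAvoid I cu1 cu2 hpm
  · cases hmi : μP i with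
    | some c₀ =>
      -- `i` received a preferential unit
      have hc : c = c₀ := by
        simp [srrFinal, hiN1, hmi] at hi
        exact hi.symm
      rw [hc] at hstrict
      by_cases hjR : j ∈ srrRej I cu1 cu2 order (srrN1 I cu1 cu2 order)
      · exact hPR.2 i c₀ hmi j hjR hstrict
      · refine key_lemma I cu1 cu2 (srrN1 I cu1 cu2 order)
          (srrRej I cu1 cu2 order (srrN1 I cu1 cu2 order)) ?_ _ μP j le_rfl hPR hms
          hjN1 hjR hjP
        intro x hx1 hx2
        rw [hR1]
        exact hR2 x hx1 hx2
    | none =>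
      -- `i` received a `cu2` unit
      have hiq : (Finset.univ.filter fun k => k ∉ srrN1 I cu1 cu2 order ∧ μP k = none ∧
          order.idxOf k < order.idxOf i).card < I.quota cu2 ∧ c = cu2 := by
        by_cases hq : (Finset.univ.filter fun k => k ∉ srrN1 I cu1 cu2 order ∧ μP k = none ∧
            order.idxOf k < order.idxOf i).card < I.quota cu2
        · refine ⟨hq, ?_⟩
          simp [srrFinal, hiN1, hmi, hq] at hi
          exact hi.symm
        · exfalso; simp [srrFinal, hiN1, hmi, hq] at hi
      obtain ⟨hq, hc⟩ := hiq
      rw [hc] at hstrict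
      have hidx : order.idxOf j < order.idxOf i := (h2P j i).mp hstrict
      have hjTj : j ∉ (Finset.univ.filter fun k => k ∉ srrN1 I cu1 cu2 order ∧ μP k = none ∧
          order.idxOf k < order.idxOf j) := by
        simp
      have hsub : insert j (Finset.univ.filter fun k => k ∉ srrN1 I cu1 cu2 order ∧
          μP k = none ∧ order.idxOf k < order.idxOf j) ⊆
          (Finset.univ.filter fun k => k ∉ srrN1 I cu1 cu2 order ∧ μP k = none ∧
          order.idxOf k < order.idxOf i) := by
        intro y hy
        rcases Finset.mem_insert.mp hy with rfl | hy
        · exact Finset.mem_filter.mpr ⟨Finset.mem_univ y, hjN1, hjP, hidx⟩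
        · obtain ⟨-, h1, h2, h3⟩ := Finset.mem_filter.mp hy
          exact Finset.mem_filter.mpr ⟨Finset.mem_univ y, h1, h2, h3.trans hidx⟩
      have hcard := Finset.card_le_card hsub
      rw [Finset.card_insert_of_notMem hjTj] at hcard
      omega
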